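/- arXiv:2102.07936 — 8 statements merged into one kernel-verified Lean document; each statement's English description precedes it below -/
import Mathlib

section
/- Let K ≥ 1 and let U_1, …, U_K be finite nonempty action sets. Let (Ω, 𝔽, ℙ) be a probability space, and for each k let Z_k : U_k → (Ω → ℝ) assign to each action an integrable real random variable; set Q_k(u_k) := E[Z_k(u_k)]. Let Ψ : ℝ^K → ℝ and let Φ : (U_1 × ⋯ × U_K) → (Ω → ℝ) assign to each joint action an integrable random variable with E[Φ(u)] = 0 for every joint action u. Define the joint random return Z_jt(u) := Ψ(Q_1(u_1), …, Q_K(u_K)) + Φ(u) (where the first summand is a constant random variable). If the set of maximizers over joint actions u of the map u ↦ Ψ(Q_1(u_1), …, Q_K(u_K)) equals the product over k of the sets of maximizers of Q_k, then the set of maximizers over joint actions u of u ↦ E[Z_jt(u)] equals the product over k of the sets of maximizers of u_k ↦ E[Z_k(u_k)]. (DFAC Theorem: the mean-shape decomposition Z_jt = Ψ + Φ with E[Φ] = 0 guarantees the distributional IGM condition.) -/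
open MeasureTheory

/-- **DFAC Theorem.** If the factorization function `Ψ` applied to the expected utilities
`Q k` satisfies IGM (its maximizer set is the product of the individual maximizer sets),
then the mean-shape decomposition `Z_jt u = Ψ (Q ∘ u) + Φ u` with `E[Φ u] = 0`
satisfies the Distributional IGM condition. -/
theorem dfac_theorem {K : ℕ} (hK : 1 ≤ K) (U : Fin K → Type*)
    [∀ k, Fintype (U k)] [∀ k, Nonempty (U k)]
    {Ω : Type*} [MeasurableSpace Ω] (ℙ : Measure Ω) [IsProbabilityMeasure ℙ]
    (Z : ∀ k, U k → Ω → ℝ) (hZint : ∀ k u, Integrable (Z k u) ℙ)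
    (Q : ∀ k, U k → ℝ) (hQ : ∀ k u, Q k u = ∫ ω, Z k u ω ∂ℙ)
    (Ψ : (Fin K → ℝ) → ℝ)
    (Φ : (∀ k, U k) → Ω → ℝ) (hΦint : ∀ u, Integrable (Φ u) ℙ)
    (hΦ0 : ∀ u, (∫ ω, Φ u ω ∂ℙ) = 0)
    (Zjt : (∀ k, U k) → Ω → ℝ)
    (hZjt : ∀ u ω, Zjt u ω = Ψ (fun k => Q k (u k)) + Φ u ω)
    (hIGM : {u : ∀ k, U k | ∀ v : ∀ k, U k,
        Ψ (fun k => Q k (v k)) ≤ Ψ (fun k => Q k (u k))}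
      = {u : ∀ k, U k | ∀ k : Fin K, ∀ v : U k, Q k v ≤ Q k (u k)}) :
    {u : ∀ k, U k | ∀ v : ∀ k, U k, (∫ ω, Zjt v ω ∂ℙ) ≤ ∫ ω, Zjt u ω ∂ℙ}
      = {u : ∀ k, U k | ∀ k : Fin K, ∀ v : U k,
          (∫ ω, Z k v ω ∂ℙ) ≤ ∫ ω, Z k (u k) ω ∂ℙ} := by
  have key : ∀ u : ∀ k, U k, (∫ ω, Zjt u ω ∂ℙ) = Ψ (fun k => Q k (u k)) := by
    intro u
    have : (∫ ω, Zjt u ω ∂ℙ) = ∫ ω, (Ψ (fun k => Q k (u k)) + Φ u ω) ∂ℙ := by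
      refine integral_congr_ae (Filter.Eventually.of_forall fun ω => hZjt u ω)
    rw [this, integral_add (integrable_const _) (hΦint u), hΦ0 u, integral_const]
    simp
  have hset : {u : ∀ k, U k | ∀ v : ∀ k, U k, (∫ ω, Zjt v ω ∂ℙ) ≤ ∫ ω, Zjt u ω ∂ℙ}
      = {u : ∀ k, U k | ∀ v : ∀ k, U k,
        Ψ (fun k => Q k (v k)) ≤ Ψ (fun k => Q k (u k))} := by
    ext u; simp only [Set.mem_setOf_eq, key]
  rw [hset, hIGM]
  ext u; simp only [Set.mem_setOf_eq]
  constructor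
  · intro h k v; rw [← hQ, ← hQ]; exact h k v
  · intro h k v; rw [hQ, hQ]; exact h k v
end

section
/- Let K ≥ 1 and let U_1, …, U_K be finite nonempty action sets. Let (Ω, 𝔽, ℙ) be a probability space and for each k let Z_k : U_k → (Ω → ℝ) assign to each action an integrable real random variable. Define the DDN joint return Z_jt(u)(ω) := Σ_{k=1}^K Z_k(u_k)(ω). Then the set of maximizers over joint actions u of u ↦ E[Z_jt(u)] equals the product over k of the sets of maximizers of u_k ↦ E[Z_k(u_k)]; i.e., [Z_k] satisfy DIGM for Z_jt. -/
open MeasureTheory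

/-- **DDN satisfies DIGM.** For integrable random utilities `Z k`, the additive joint
return `Z_jt u = ∑ k, Z k (u k)` has the property that the maximizers of its expectation
form exactly the product of the maximizer sets of the individual expected utilities. -/
theorem ddn_digm {K : ℕ} (hK : 1 ≤ K) (U : Fin K → Type*)
    [∀ k, Fintype (U k)] [∀ k, Nonempty (U k)]
    {Ω : Type*} [MeasurableSpace Ω] (ℙ : Measure Ω) [IsProbabilityMeasure ℙ]
    (Z : ∀ k, U k → Ω → ℝ) (hZint : ∀ k u, Integrable (Z k u) ℙ)
    (Zjt : (∀ k, U k) → Ω → ℝ)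
    (hZjt : ∀ u ω, Zjt u ω = ∑ k : Fin K, Z k (u k) ω) :
    {u : ∀ k, U k | ∀ v : ∀ k, U k, (∫ ω, Zjt v ω ∂ℙ) ≤ ∫ ω, Zjt u ω ∂ℙ}
      = {u : ∀ k, U k | ∀ k : Fin K, ∀ v : U k,
          (∫ ω, Z k v ω ∂ℙ) ≤ ∫ ω, Z k (u k) ω ∂ℙ} := by
  have key : ∀ u : ∀ k, U k, (∫ ω, Zjt u ω ∂ℙ) = ∑ k : Fin K, ∫ ω, Z k (u k) ω ∂ℙ := by
    intro u
    rw [show (fun ω => Zjt u ω) = fun ω => ∑ k : Fin K, Z k (u k) ω from funext (hZjt u)]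
    exact integral_finset_sum _ (fun k _ => hZint k (u k))
  ext u
  simp only [Set.mem_setOf_eq, key]
  constructor
  · intro h k v
    have := h (Function.update u k v)
    have hsum : ∑ j : Fin K, ∫ ω, Z j (Function.update u k v j) ω ∂ℙ
        = (∑ j : Fin K, ∫ ω, Z j (u j) ω ∂ℙ) - (∫ ω, Z k (u k) ω ∂ℙ) + ∫ ω, Z k v ω ∂ℙ := by
      rw [← Finset.sum_erase_add _ _ (Finset.mem_univ k),
          ← Finset.sum_erase_add Finset.univ (fun j => ∫ ω, Z j (u j) ω ∂ℙ) (Finset.mem_univ k)]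
      have : ∀ j ∈ Finset.univ.erase k,
          (∫ ω, Z j (Function.update u k v j) ω ∂ℙ) = ∫ ω, Z j (u j) ω ∂ℙ := by
        intro j hj
        rw [Function.update_of_ne (Finset.ne_of_mem_erase hj)]
      rw [Finset.sum_congr rfl this, Function.update_self]
      ring
    rw [hsum] at this
    linarith
  · intro h v
    exact Finset.sum_le_sum (fun k _ => h k (v k))
end

section
/- Let K ≥ 1 and let U_1, …, U_K be finite nonempty action sets. Let (Ω, 𝔽, ℙ) be a probability space, for each k let Z_k : U_k → (Ω → ℝ) assign to each action an integrable real random variable, and set Q_k(u_k) := E[Z_k(u_k)]. Let M : ℝ^K → ℝ be strictly increasing in each coordinate (for each k, x ↦ M(…, x, …) is strictly monotone increasing when the other coordinates are fixed). Define the DMIX joint return Z_jt(u) := M(Q_1(u_1), …, Q_K(u_K)) + Σ_{k=1}^K (Z_k(u_k) − Q_k(u_k)). Then the set of maximizers over joint actions u of u ↦ E[Z_jt(u)] equals the product over k of the sets of maximizers of u_k ↦ E[Z_k(u_k)]; i.e., [Z_k] satisfy DIGM for Z_jt. -/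
open MeasureTheory

lemma mono_of_coordwise {K : ℕ} (M : (Fin K → ℝ) → ℝ)
    (hM : ∀ (k : Fin K) (x : Fin K → ℝ),
      StrictMono (fun y : ℝ => M (Function.update x k y))) :
    Monotone M := by
  intro a b hab
  have key : ∀ s : Finset (Fin K), M a ≤ M (s.piecewise b a) := by
    intro s
    induction s using Finset.induction_on with
    | empty => simp
    | @insert k s hk ih =>
      rw [Finset.piecewise_insert]
      refine ih.trans ?_
      have h1 : s.piecewise b a = Function.update (s.piecewise b a) k (a k) := by
        rw [show a k = s.piecewise b a k by simp [Finset.piecewise_eq_of_notMem _ _ _ hk]]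
        simp
      nth_rewrite 1 [h1]
      exact (hM k (s.piecewise b a)).monotone (hab k)
  have := key Finset.univ
  simpa using this

/-- **DMIX satisfies DIGM.** For integrable random utilities `Z k` with means `Q k`, and a
mixing function `M` strictly increasing in each coordinate, the DMIX joint return
`Z_jt u = M (Q ∘ u) + ∑ k, (Z k (u k) - Q k (u k))` has the property that the maximizers
of its expectation form exactly the product of the maximizer sets of the individual
expected utilities. -/
theorem dmix_digm {K : ℕ} (hK : 1 ≤ K) (U : Fin K → Type*)
    [∀ k, Fintype (U k)] [∀ k, Nonempty (U k)]
    {Ω : Type*} [MeasurableSpace Ω] (ℙ : Measure Ω) [IsProbabilityMeasure ℙ]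
    (Z : ∀ k, U k → Ω → ℝ) (hZint : ∀ k u, Integrable (Z k u) ℙ)
    (Q : ∀ k, U k → ℝ) (hQ : ∀ k u, Q k u = ∫ ω, Z k u ω ∂ℙ)
    (M : (Fin K → ℝ) → ℝ)
    (hM : ∀ (k : Fin K) (x : Fin K → ℝ),
      StrictMono (fun y : ℝ => M (Function.update x k y)))
    (Zjt : (∀ k, U k) → Ω → ℝ)
    (hZjt : ∀ u ω, Zjt u ω
      = M (fun k => Q k (u k)) + ∑ k : Fin K, (Z k (u k) ω - Q k (u k))) :
    {u : ∀ k, U k | ∀ v : ∀ k, U k, (∫ ω, Zjt v ω ∂ℙ) ≤ ∫ ω, Zjt u ω ∂ℙ}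
      = {u : ∀ k, U k | ∀ k : Fin K, ∀ v : U k,
          (∫ ω, Z k v ω ∂ℙ) ≤ ∫ ω, Z k (u k) ω ∂ℙ} := by
  have key : ∀ u : ∀ k, U k, (∫ ω, Zjt u ω ∂ℙ) = M (fun k => Q k (u k)) := by
    intro u
    have h1 : Zjt u = fun ω =>
        M (fun k => Q k (u k)) + ∑ k : Fin K, (Z k (u k) ω - Q k (u k)) :=
      funext (hZjt u)
    have hint : ∀ k : Fin K, Integrable (fun ω => Z k (u k) ω - Q k (u k)) ℙ :=
      fun k => (hZint k (u k)).sub (integrable_const _)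
    rw [h1, integral_add (integrable_const _)
        (integrable_finset_sum _ fun k _ => hint k),
      integral_const, integral_finset_sum _ fun k _ => hint k]
    have : ∀ k : Fin K, (∫ ω, (Z k (u k) ω - Q k (u k)) ∂ℙ) = 0 := by
      intro k
      rw [integral_sub (hZint k (u k)) (integrable_const _), integral_const]
      simp [hQ]
    simp [this]
  ext u
  simp only [Set.mem_setOf_eq, key]
  constructor
  · intro h k v
    have h2 := h (Function.update u k v)
    have e1 : (fun j => Q j (Function.update u k v j))
        = Function.update (fun j => Q j (u j)) k (Q k v) := by
      ext j
      by_cases hj : j = k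
      · subst hj; simp
      · simp [Function.update_of_ne hj]
    have e2 : (fun j => Q j (u j))
        = Function.update (fun j => Q j (u j)) k (Q k (u k)) := by
      simp
    rw [e1] at h2
    nth_rewrite 2 [e2] at h2
    have := (hM k (fun j => Q j (u j))).le_iff_le.mp h2
    rw [hQ k v, hQ k (u k)] at this
    exact this
  · intro h v
    refine mono_of_coordwise M hM ?_
    intro k
    have := h k (v k)
    rw [← hQ, ← hQ] at this
    exact this
end

section
/- There exist a probability space (Ω, 𝔽, ℙ), two finite nonempty action sets U_1 and U_2, integrable random utilities Z_1 : U_1 → (Ω → ℝ) and Z_2 : U_2 → (Ω → ℝ) with expected utilities Q_k(u_k) := E[Z_k(u_k)], and a function Ψ : ℝ² → ℝ strictly increasing in each coordinate, such that: (i) the set of maximizers over joint actions (u_1, u_2) of Ψ(Q_1(u_1), Q_2(u_2)) equals the product of the sets of maximizers of Q_1 and of Q_2 (so IGM holds for the deterministic factorization by Ψ), yet (ii) the set of maximizers over joint actions (u_1, u_2) of E[Ψ(Z_1(u_1), Z_2(u_2))] is NOT equal to the product of the sets of maximizers of Q_1 and of Q_2 (so the naive distributional factorization Z_jt(u) :=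 Ψ(Z_1(u_1), Z_2(u_2)) fails DIGM). In other words, replacing deterministic utilities by random utilities inside a factorization function that satisfies IGM is insufficient to guarantee DIGM. -/
open MeasureTheory

/-- **Naive distributional factorization can fail DIGM.** There exist a probability space,
two finite nonempty action sets, integrable random utilities `Z1, Z2`, and a function
`Ψ : ℝ → ℝ → ℝ` strictly increasing in each coordinate, such that IGM holds for the
deterministic factorization `(u1, u2) ↦ Ψ (Q1 u1) (Q2 u2)` of the expected utilities,
yet DIGM fails for the naive distributional factorization
`(u1, u2) ↦ (ω ↦ Ψ (Z1 u1 ω) (Z2 u2 ω))`. -/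
theorem naive_distributional_factorization_fails_digm :
    ∃ (Ω : Type) (mΩ : MeasurableSpace Ω) (ℙ : Measure Ω)
      (_ : IsProbabilityMeasure ℙ)
      (U₁ U₂ : Type) (_ : Fintype U₁) (_ : Fintype U₂)
      (_ : Nonempty U₁) (_ : Nonempty U₂)
      (Z₁ : U₁ → Ω → ℝ) (Z₂ : U₂ → Ω → ℝ) (Ψ : ℝ → ℝ → ℝ),
      (∀ u₁, Integrable (Z₁ u₁) ℙ) ∧
      (∀ u₂, Integrable (Z₂ u₂) ℙ) ∧
      (∀ y : ℝ, StrictMono (fun x : ℝ => Ψ x y)) ∧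
      (∀ x : ℝ, StrictMono (fun y : ℝ => Ψ x y)) ∧
      ({u : U₁ × U₂ | ∀ v : U₁ × U₂,
          Ψ (∫ ω, Z₁ v.1 ω ∂ℙ) (∫ ω, Z₂ v.2 ω ∂ℙ)
            ≤ Ψ (∫ ω, Z₁ u.1 ω ∂ℙ) (∫ ω, Z₂ u.2 ω ∂ℙ)}
        = {u : U₁ × U₂ |
            (∀ v₁ : U₁, (∫ ω, Z₁ v₁ ω ∂ℙ) ≤ ∫ ω, Z₁ u.1 ω ∂ℙ) ∧
            (∀ v₂ : U₂, (∫ ω, Z₂ v₂ ω ∂ℙ) ≤ ∫ ω, Z₂ u.2 ω ∂ℙ)}) ∧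
      ({u : U₁ × U₂ | ∀ v : U₁ × U₂,
          (∫ ω, Ψ (Z₁ v.1 ω) (Z₂ v.2 ω) ∂ℙ) ≤ ∫ ω, Ψ (Z₁ u.1 ω) (Z₂ u.2 ω) ∂ℙ}
        ≠ {u : U₁ × U₂ |
            (∀ v₁ : U₁, (∫ ω, Z₁ v₁ ω ∂ℙ) ≤ ∫ ω, Z₁ u.1 ω ∂ℙ) ∧
            (∀ v₂ : U₂, (∫ ω, Z₂ v₂ ω ∂ℙ) ≤ ∫ ω, Z₂ u.2 ω ∂ℙ)}) := by
  classical
  set μ : Measure Bool := (1/5 : ENNReal) • Measure.dirac true + (4/5 : ENNReal) • Measure.dirac false with hμ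
  haveI h1fin : IsFiniteMeasure ((1/5 : ENNReal) • Measure.dirac (true : Bool)) := by
    constructor
    rw [Measure.smul_apply, smul_eq_mul]
    exact ENNReal.mul_lt_top (ENNReal.div_lt_top (by norm_num) (by norm_num)) (by simp)
  haveI h2fin : IsFiniteMeasure ((4/5 : ENNReal) • Measure.dirac (false : Bool)) := by
    constructor
    rw [Measure.smul_apply, smul_eq_mul]
    exact ENNReal.mul_lt_top (ENNReal.div_lt_top (by norm_num) (by norm_num)) (by simp)
  have hprob : IsProbabilityMeasure μ := by
    constructor
    rw [hμ, Measure.add_apply, Measure.smul_apply, Measure.smul_apply,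
      Measure.dirac_apply_of_mem (Set.mem_univ _), Measure.dirac_apply_of_mem (Set.mem_univ _),
      smul_eq_mul, smul_eq_mul, mul_one, mul_one, ENNReal.div_add_div_same,
      show (1+4 : ENNReal) = 5 by norm_num, ENNReal.div_self (by norm_num) (by norm_num)]
  haveI := hprob
  have hint : ∀ f : Bool → ℝ, ∫ ω, f ω ∂μ = (1/5) * f true + (4/5) * f false := by
    intro f
    rw [hμ, integral_add_measure .of_finite .of_finite,
        integral_smul_measure, integral_smul_measure, integral_dirac, integral_dirac]
    norm_num [ENNReal.toReal_div]
  have hmono : StrictMono (fun y : ℝ => y ^ 3) := Odd.strictMono_pow (by decide)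
  refine ⟨Bool, inferInstance, μ, hprob, Unit, Bool, inferInstance, inferInstance,
    inferInstance, inferInstance,
    (fun _ _ => 0), (fun u ω => if u then 0 else (if ω then 1 else -(1/2))),
    (fun x y => x + y^3), fun _ => .of_finite, fun _ => .of_finite, ?_, ?_, ?_, ?_⟩
  · intro y
    exact fun a b h => by simpa using h
  · intro x
    exact fun a b h => by simpa using hmono h
  · ext u
    simp only [Set.mem_setOf_eq, integral_zero]
    constructor
    · intro h
      refine ⟨fun _ => le_rfl, fun v₂ => ?_⟩
      have h' := h (u.1, v₂)
      simp only at h'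
      by_contra hc
      push_neg at hc
      have h3 := hmono hc
      simp only at h3
      linarith
    · rintro ⟨-, h2⟩ v
      simpa using hmono.monotone (h2 v.2)
  · intro hEq
    have hW : ∀ u : Bool, (∫ ω, ((0:ℝ) + (if u then (0:ℝ) else (if ω then 1 else -(1/2)))^3) ∂μ)
        = if u then 0 else 1/10 := by
      intro u
      rw [hint]
      cases u <;> norm_num
    have hQ2 : ∀ u : Bool, (∫ ω, (if u then (0:ℝ) else (if ω then 1 else -(1/2))) ∂μ)
        = if u then 0 else -(1/5) := by
      intro u
      rw [hint]
      cases u <;> norm_num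
    have key : (((), true) : Unit × Bool) ∈ {u : Unit × Bool | ∀ v : Unit × Bool,
        (∫ ω, (fun x y => x + y^3) ((fun (_ : Unit) (_ : Bool) => (0:ℝ)) v.1 ω)
            ((fun u ω => if u then (0:ℝ) else (if ω then 1 else -(1/2))) v.2 ω) ∂μ)
          ≤ ∫ ω, (fun x y => x + y^3) ((fun (_ : Unit) (_ : Bool) => (0:ℝ)) u.1 ω)
            ((fun u ω => if u then (0:ℝ) else (if ω then 1 else -(1/2))) u.2 ω) ∂μ} := by
      rw [hEq]
      refine ⟨fun _ => le_rfl, fun v₂ => ?_⟩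
      show (∫ ω, (if v₂ then (0:ℝ) else (if ω then 1 else -(1/2))) ∂μ)
          ≤ ∫ ω, (if true then (0:ℝ) else (if ω then 1 else -(1/2))) ∂μ
      rw [hQ2, hQ2]
      cases v₂ <;> norm_num
    have h2 : (∫ ω, ((0:ℝ) + (if false then (0:ℝ) else (if ω then 1 else -(1/2)))^3) ∂μ)
        ≤ ∫ ω, ((0:ℝ) + (if true then (0:ℝ) else (if ω then 1 else -(1/2)))^3) ∂μ :=
      key ((), false)
    rw [hW, hW] at h2
    norm_num at h2
end

section
/- Let K ≥ 1, let U_1, …, U_K be finite nonempty action sets, let Q_k : U_k → ℝ for each k, and let M : ℝ^K → ℝ be monotonically nondecreasing in each coordinate (for each k, x ↦ M(…, x, …) is monotone nondecreasing when the other coordinates are fixed). Define Q_jt(u) := M(Q_1(u_1), …, Q_K(u_K)). If for each k the action u_k* maximizes Q_k over U_k, then the joint action (u_1*, …, u_K*) maximizes Q_jt over U_1 × ⋯ × U_K. (Monotonicity of the mixing function is a sufficient condition for the greedy individual actions to achieve the global maximum.) -/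
lemma mono_pi_aux {K : ℕ} (M : (Fin K → ℝ) → ℝ)
    (hM : ∀ (k : Fin K) (x : Fin K → ℝ),
      Monotone (fun y : ℝ => M (Function.update x k y)))
    (x y : Fin K → ℝ) (hxy : ∀ k, x k ≤ y k) :
    ∀ s : Finset (Fin K), M x ≤ M (s.piecewise y x) := by
  intro s
  induction s using Finset.induction with
  | empty => simp
  | @insert k s hk ih =>
    rw [Finset.piecewise_insert]
    calc M x ≤ M (s.piecewise y x) := ih
    _ ≤ M (Function.update (s.piecewise y x) k (y k)) := by
        have h := hM k (s.piecewise y x) (le_trans (by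
          by_cases h : k ∈ s <;> simp [Finset.piecewise, h, hxy k] : (s.piecewise y x) k ≤ y k) le_rfl)
        simpa using h

/-- **Monotonicity suffices for greedy individual actions to achieve the global maximum
(QMIX).** If the mixing function `M` is monotonically nondecreasing in each coordinate
and each `uStar k` maximizes `Q k`, then `uStar` maximizes
`Q_jt u = M (fun k => Q k (u k))`. -/
theorem monotonicity_greedy_joint_max {K : ℕ} (hK : 1 ≤ K) (U : Fin K → Type*)
    [∀ k, Fintype (U k)] [∀ k, Nonempty (U k)]
    (Q : ∀ k, U k → ℝ)
    (M : (Fin K → ℝ) → ℝ)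
    (hM : ∀ (k : Fin K) (x : Fin K → ℝ),
      Monotone (fun y : ℝ => M (Function.update x k y)))
    (Qjt : (∀ k, U k) → ℝ)
    (hQjt : ∀ u, Qjt u = M (fun k => Q k (u k)))
    (uStar : ∀ k, U k)
    (hStar : ∀ k : Fin K, ∀ v : U k, Q k v ≤ Q k (uStar k)) :
    ∀ u : ∀ k, U k, Qjt u ≤ Qjt uStar := by
  intro u
  rw [hQjt, hQjt]
  have := mono_pi_aux M hM (fun k => Q k (u k)) (fun k => Q k (uStar k))
    (fun k => hStar k (u k)) Finset.univ
  simpa using this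
end

section
/- Let K ≥ 1, let U_1, …, U_K be finite nonempty action sets, let Q_k : U_k → ℝ for each k, and let M : ℝ^K → ℝ be strictly increasing in each coordinate (for each k, x ↦ M(…, x, …) is strictly monotone increasing when the other coordinates are fixed). Define Q_jt(u) := M(Q_1(u_1), …, Q_K(u_K)). Then the set of maximizers of Q_jt over joint actions equals the product over k of the sets of maximizers of the Q_k; that is, Q_jt satisfies IGM for [Q_k]. -/
lemma mix_mono {K : ℕ} (M : (Fin K → ℝ) → ℝ)
    (hM : ∀ (k : Fin K) (x : Fin K → ℝ),
      StrictMono (fun y : ℝ => M (Function.update x k y)))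
    {x y : Fin K → ℝ} (h : ∀ k, x k ≤ y k) : M x ≤ M y := by
  have key : ∀ s : Finset (Fin K),
      M x ≤ M (fun k => if k ∈ s then y k else x k) := by
    intro s
    induction s using Finset.induction_on with
    | empty => simp
    | @insert a s ha ih =>
      have heq : (fun k => if k ∈ insert a s then y k else x k)
          = Function.update (fun k => if k ∈ s then y k else x k) a (y a) := by
        funext k
        by_cases hk : k = a
        · subst hk; simp [Function.update]
        · simp [Function.update, hk, Finset.mem_insert]
      rw [heq]
      refine ih.trans ?_
      have hupd : (fun k => if k ∈ s then y k else x k)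
          = Function.update (fun k => if k ∈ s then y k else x k) a
              (if a ∈ s then y a else x a) := by
        simp [Function.update_eq_self]
      calc M (fun k => if k ∈ s then y k else x k)
          = M (Function.update (fun k => if k ∈ s then y k else x k) a
              (if a ∈ s then y a else x a)) := by rw [← hupd]
        _ ≤ M (Function.update (fun k => if k ∈ s then y k else x k) a (y a)) := by
            apply (hM a _).monotone
            simp [ha, h a]
  have := key Finset.univ
  simpa using this

/-- **Strict monotonicity is a sufficient condition for IGM (QMIX).** If the mixing
function `M` is strictly increasing in each coordinate, then the maximizer set of
`Q_jt u = M (fun k => Q k (u k))` equals the product of the individual maximizer sets. -/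
theorem strict_monotonicity_igm {K : ℕ} (hK : 1 ≤ K) (U : Fin K → Type*)
    [∀ k, Fintype (U k)] [∀ k, Nonempty (U k)]
    (Q : ∀ k, U k → ℝ)
    (M : (Fin K → ℝ) → ℝ)
    (hM : ∀ (k : Fin K) (x : Fin K → ℝ),
      StrictMono (fun y : ℝ => M (Function.update x k y)))
    (Qjt : (∀ k, U k) → ℝ)
    (hQjt : ∀ u, Qjt u = M (fun k => Q k (u k))) :
    {u : ∀ k, U k | ∀ v : ∀ k, U k, Qjt v ≤ Qjt u}
      = {u : ∀ k, U k | ∀ k : Fin K, ∀ v : U k, Q k v ≤ Q k (u k)} := by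
  ext u
  simp only [Set.mem_setOf_eq]
  constructor
  · intro hu k v
    have h := hu (Function.update u k v)
    rw [hQjt, hQjt] at h
    set x : Fin K → ℝ := fun j => Q j (u j) with hx
    have h1 : (fun j => Q j (Function.update u k v j)) = Function.update x k (Q k v) := by
      funext j
      by_cases hj : j = k
      · subst hj; simp
      · simp [Function.update, hj, hx]
    rw [h1] at h
    have h2 : M x = M (Function.update x k (x k)) := by simp
    rw [h2] at h
    exact (hM k x).le_iff_le.mp h
  · intro hu v
    rw [hQjt, hQjt]
    exact mix_mono M hM (fun k => hu k (v k))
end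

section
/- Let K ≥ 1, let μ_1, …, μ_K be probability measures on ℝ with quantile functions f_1, …, f_K, and let β_1, …, β_K be nonnegative real numbers. Then there exist a probability space (Ω, 𝔽, ℙ) and random variables Z_1, …, Z_K : Ω → ℝ such that the law of Z_k is μ_k for each k, and the quantile function of the law of the random variable Z := Σ_{k=1}^K β_k Z_k agrees on (0,1) with the quantile mixture ω ↦ Σ_{k=1}^K β_k f_k(ω). (A quantile mixture with nonnegative coefficients corresponds to a nonnegatively weighted sum of random variables with the given component distributions.) -/
open MeasureTheory

/-- The cumulative distribution function of a measure on `ℝ`: `F_μ(x) = μ (-∞, x]`. -/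
noncomputable def cdfOf (μ : Measure ℝ) (x : ℝ) : ℝ :=
  (μ (Set.Iic x)).toReal

/-- The quantile function (generalized inverse CDF) of a measure on `ℝ`:
`f_μ(ω) = inf {x | ω ≤ F_μ(x)}`. -/
noncomputable def quantile (μ : Measure ℝ) (ω : ℝ) : ℝ :=
  sInf {x : ℝ | ω ≤ cdfOf μ x}

section Aux

open ProbabilityTheory Set Filter Topology

lemma cdfOf_eq_cdf (μ : Measure ℝ) [IsProbabilityMeasure μ] : cdfOf μ = ⇑(cdf μ) :=
  funext fun x => (cdf_eq_real μ x).symm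

lemma cdfOf_nonneg (μ : Measure ℝ) [IsProbabilityMeasure μ] (x : ℝ) : 0 ≤ cdfOf μ x := by
  rw [cdfOf_eq_cdf]; exact cdf_nonneg μ x

lemma cdfOf_le_one (μ : Measure ℝ) [IsProbabilityMeasure μ] (x : ℝ) : cdfOf μ x ≤ 1 := by
  rw [cdfOf_eq_cdf]; exact cdf_le_one μ x

lemma quantile_set_bddBelow (μ : Measure ℝ) [IsProbabilityMeasure μ] {ω : ℝ} (hω0 : 0 < ω) :
    BddBelow {x : ℝ | ω ≤ cdfOf μ x} := by
  obtain ⟨a, ha⟩ : ∃ a, cdf μ a < ω :=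
    ((tendsto_cdf_atBot μ).eventually (eventually_lt_nhds hω0)).exists
  refine ⟨a, fun t ht => ?_⟩
  rw [mem_setOf_eq, cdfOf_eq_cdf] at ht
  by_contra hta
  push_neg at hta
  exact absurd (ht.trans (monotone_cdf μ hta.le)) (not_le.mpr ha)

lemma quantile_set_nonempty (μ : Measure ℝ) [IsProbabilityMeasure μ] {ω : ℝ} (hω1 : ω < 1) :
    Set.Nonempty {x : ℝ | ω ≤ cdfOf μ x} := by
  obtain ⟨b, hb⟩ : ∃ b, ω < cdf μ b :=
    ((tendsto_cdf_atTop μ).eventually (eventually_gt_nhds hω1)).exists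
  exact ⟨b, by rw [mem_setOf_eq, cdfOf_eq_cdf]; exact hb.le⟩

/-- The Galois-connection property of the quantile function on `(0,1)`. -/
lemma quantile_le_iff (μ : Measure ℝ) [IsProbabilityMeasure μ] {ω x : ℝ}
    (hω0 : 0 < ω) (hω1 : ω < 1) :
    quantile μ ω ≤ x ↔ ω ≤ cdfOf μ x := by
  have hbdd := quantile_set_bddBelow μ hω0
  have hne := quantile_set_nonempty μ (ω := ω) hω1
  constructor
  · intro h
    rw [cdfOf_eq_cdf]
    have htend : Tendsto (cdf μ) (𝓝[>] x) (𝓝 (cdf μ x)) :=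
      ((cdf μ).right_continuous x).mono_left (nhdsWithin_mono x Ioi_subset_Ici_self)
    refine ge_of_tendsto htend ?_
    filter_upwards [self_mem_nhdsWithin] with y hy
    obtain ⟨t, ht, htl⟩ := (csInf_lt_iff hbdd hne).mp (lt_of_le_of_lt h hy)
    rw [mem_setOf_eq, cdfOf_eq_cdf] at ht
    exact ht.trans (monotone_cdf μ htl.le)
  · intro h
    exact csInf_le hbdd h

lemma quantile_monoOn (μ : Measure ℝ) [IsProbabilityMeasure μ] {ω₁ ω₂ : ℝ}
    (h₁ : ω₁ ∈ Set.Ioo (0:ℝ) 1) (h₂ : ω₂ ∈ Set.Ioo (0:ℝ) 1) (h : ω₁ ≤ ω₂) :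
    quantile μ ω₁ ≤ quantile μ ω₂ :=
  (quantile_le_iff μ h₁.1 h₁.2).mpr
    (h.trans ((quantile_le_iff μ h₂.1 h₂.2).mp le_rfl))

/-- Left-approximation (left-continuity-type) property of the quantile function. -/
lemma quantile_left_approx (μ : Measure ℝ) [IsProbabilityMeasure μ] {ω ε : ℝ}
    (hω : ω ∈ Set.Ioo (0:ℝ) 1) (hε : 0 < ε) :
    ∃ ω' ∈ Set.Ioo (0:ℝ) ω, quantile μ ω - ε < quantile μ ω' := by
  by_contra h
  push_neg at h
  set c := cdfOf μ (quantile μ ω - ε) with hcdef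
  have hc0 : 0 ≤ c := cdfOf_nonneg μ _
  have hF : ∀ ω' ∈ Set.Ioo (0:ℝ) ω, ω' ≤ c := fun ω' hω' =>
    (quantile_le_iff μ hω'.1 (hω'.2.trans hω.2)).mp (h ω' hω')
  have hωc : ω ≤ c := by
    by_contra hcω
    push_neg at hcω
    have hmem : (c + ω) / 2 ∈ Set.Ioo (0:ℝ) ω :=
      ⟨by linarith [hω.1], by linarith⟩
    have := hF _ hmem
    linarith
  have := (quantile_le_iff μ hω.1 hω.2).mpr hωc
  linarith

lemma volume_Ioo_inter_Iic {c : ℝ} (hc0 : 0 ≤ c) (hc1 : c ≤ 1) :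
    volume (Set.Ioo (0:ℝ) 1 ∩ Set.Iic c) = ENNReal.ofReal c := by
  rcases eq_or_lt_of_le hc1 with rfl | hc
  · rw [Set.inter_eq_left.mpr (fun x hx => hx.2.le)]
    simp [Real.volume_Ioo]
  · have hset : Set.Ioo (0:ℝ) 1 ∩ Set.Iic c = Set.Ioc 0 c := by
      ext x
      simp only [Set.mem_inter_iff, Set.mem_Ioo, Set.mem_Iic, Set.mem_Ioc]
      exact ⟨fun h => ⟨h.1.1, h.2⟩, fun h => ⟨⟨h.1, lt_of_le_of_lt h.2 hc⟩, h.2⟩⟩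
    rw [hset, Real.volume_Ioc, sub_zero]

end Aux

/-- **Quantile mixtures correspond to nonnegatively weighted sums of random variables.**
Given probability measures `μ k` with quantile functions `f k` and nonnegative weights
`β k`, there exist a probability space and random variables `Z k` with laws `μ k` such
that the quantile function of the law of `∑ k, β k * Z k` agrees on `(0, 1)` with the
quantile mixture `ω ↦ ∑ k, β k * f k ω`. -/
theorem quantile_mixture_is_sum_of_rvs {K : ℕ} (hK : 1 ≤ K)
    (μ : Fin K → Measure ℝ) [∀ k, IsProbabilityMeasure (μ k)]
    (β : Fin K → ℝ) (hβ : ∀ k, 0 ≤ β k) :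
    ∃ (Ω : Type) (mΩ : MeasurableSpace Ω) (ℙ : Measure Ω)
      (_ : IsProbabilityMeasure ℙ) (Z : Fin K → Ω → ℝ),
      (∀ k, Measurable (Z k)) ∧
      (∀ k, Measure.map (Z k) ℙ = μ k) ∧
      (∀ ω ∈ Set.Ioo (0 : ℝ) 1,
        quantile (Measure.map (fun x => ∑ k : Fin K, β k * Z k x) ℙ) ω
          = ∑ k : Fin K, β k * quantile (μ k) ω) := by
  classical
  haveI : Nonempty (Fin K) := ⟨⟨0, hK⟩⟩
  set ℙ : Measure ℝ := volume.restrict (Set.Ioo 0 1) with hPdef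
  have hProb : IsProbabilityMeasure ℙ := ⟨by simp [hPdef, Real.volume_Ioo]⟩
  set c : ℝ → ℝ := fun u => if u ∈ Set.Ioo (0:ℝ) 1 then u else 1/2 with hcdef
  have hcmem : ∀ u, c u ∈ Set.Ioo (0:ℝ) 1 := by
    intro u
    simp only [hcdef]
    split_ifs with h
    · exact h
    · simp only [Set.mem_Ioo]
      norm_num
  have hcId : ∀ u ∈ Set.Ioo (0:ℝ) 1, c u = u := fun u hu => if_pos hu
  have hcMeas : Measurable c := Measurable.ite measurableSet_Ioo measurable_id measurable_const
  set Z : Fin K → ℝ → ℝ := fun k u => quantile (μ k) (c u) with hZdef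
  have hZpre : ∀ k a, Z k ⁻¹' Set.Iic a = c ⁻¹' (Set.Ioo 0 1 ∩ Set.Iic (cdfOf (μ k) a)) := by
    intro k a
    ext u
    simp only [Set.mem_preimage, Set.mem_Iic, Set.mem_inter_iff, hZdef]
    constructor
    · intro h
      exact ⟨hcmem u, (quantile_le_iff (μ k) (hcmem u).1 (hcmem u).2).mp h⟩
    · intro h
      exact (quantile_le_iff (μ k) (hcmem u).1 (hcmem u).2).mpr h.2
  have hZmeas : ∀ k, Measurable (Z k) := by
    intro k
    refine measurable_of_Iic fun a => ?_
    rw [hZpre k a]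
    exact hcMeas (measurableSet_Ioo.inter measurableSet_Iic)
  have hlaw : ∀ k, Measure.map (Z k) ℙ = μ k := by
    intro k
    haveI : IsProbabilityMeasure (Measure.map (Z k) ℙ) :=
      Measure.isProbabilityMeasure_map (hZmeas k).aemeasurable
    refine Measure.ext_of_Iic _ _ (fun a => ?_)
    rw [Measure.map_apply (hZmeas k) measurableSet_Iic, hPdef,
      Measure.restrict_apply ((hZmeas k) measurableSet_Iic)]
    have hset : Z k ⁻¹' Set.Iic a ∩ Set.Ioo 0 1 = Set.Ioo (0:ℝ) 1 ∩ Set.Iic (cdfOf (μ k) a) := by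
      ext u
      constructor
      · rintro ⟨h1, h2⟩
        have h1' : quantile (μ k) u ≤ a := by
          simpa [hZdef, hcId u h2] using h1
        exact ⟨h2, (quantile_le_iff (μ k) h2.1 h2.2).mp h1'⟩
      · rintro ⟨h2, h1⟩
        refine ⟨?_, h2⟩
        have h1' : quantile (μ k) u ≤ a := (quantile_le_iff (μ k) h2.1 h2.2).mpr h1
        simpa [hZdef, hcId u h2] using h1'

    rw [hset, volume_Ioo_inter_Iic (cdfOf_nonneg (μ k) a) (cdfOf_le_one (μ k) a)]
    rw [cdfOf, ENNReal.ofReal_toReal (measure_ne_top _ _)]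
  -- the weighted sum
  set S : ℝ → ℝ := fun u => ∑ k : Fin K, β k * Z k u with hSdef
  have hSmeas : Measurable S := by
    apply Finset.measurable_sum
    intro k _
    exact (hZmeas k).const_mul (β k)
  have hSval : ∀ u ∈ Set.Ioo (0:ℝ) 1, S u = ∑ k : Fin K, β k * quantile (μ k) u := by
    intro u hu
    simp only [hSdef, hZdef, hcId u hu]
  have hSmono : ∀ u ∈ Set.Ioo (0:ℝ) 1, ∀ v ∈ Set.Ioo (0:ℝ) 1, u ≤ v → S u ≤ S v := by
    intro u hu v hv huv
    rw [hSval u hu, hSval v hv]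
    exact Finset.sum_le_sum fun k _ =>
      mul_le_mul_of_nonneg_left (quantile_monoOn (μ k) hu hv huv) (hβ k)
  set ν : Measure ℝ := Measure.map S ℙ with hνdef
  haveI hνprob : IsProbabilityMeasure ν := Measure.isProbabilityMeasure_map hSmeas.aemeasurable
  have hνIic : ∀ x, ν (Set.Iic x) = volume (S ⁻¹' Set.Iic x ∩ Set.Ioo 0 1) := by
    intro x
    rw [hνdef, Measure.map_apply hSmeas measurableSet_Iic, hPdef,
      Measure.restrict_apply (hSmeas measurableSet_Iic)]
  refine ⟨ℝ, inferInstance, ℙ, hProb, Z, hZmeas, hlaw, ?_⟩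
  intro ω hω
  -- key 1 : ω ≤ cdfOf ν (S ω)
  have key1 : ω ≤ cdfOf ν (S ω) := by
    have hsub : Set.Ioc (0:ℝ) ω ⊆ S ⁻¹' Set.Iic (S ω) ∩ Set.Ioo 0 1 := by
      intro u hu
      have hu' : u ∈ Set.Ioo (0:ℝ) 1 := ⟨hu.1, lt_of_le_of_lt hu.2 hω.2⟩
      exact ⟨hSmono u hu' ω hω hu.2, hu'⟩
    have hmeas : ENNReal.ofReal ω ≤ ν (Set.Iic (S ω)) := by
      rw [hνIic]
      calc ENNReal.ofReal ω = volume (Set.Ioc (0:ℝ) ω) := by rw [Real.volume_Ioc, sub_zero]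
        _ ≤ _ := measure_mono hsub
    calc ω = (ENNReal.ofReal ω).toReal := (ENNReal.toReal_ofReal hω.1.le).symm
      _ ≤ cdfOf ν (S ω) := ENNReal.toReal_mono (measure_ne_top ν _) hmeas
  -- key 2 : every element of the quantile set is ≥ S ω
  have key2 : ∀ x ∈ {x : ℝ | ω ≤ cdfOf ν x}, S ω ≤ x := by
    intro x hx
    rw [Set.mem_setOf_eq] at hx
    by_contra hxS
    push_neg at hxS
    set B : ℝ := ∑ k : Fin K, β k with hBdef
    have hB0 : 0 ≤ B := Finset.sum_nonneg fun k _ => hβ k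
    set ε : ℝ := (S ω - x) / (B + 1) with hεdef
    have hε : 0 < ε := div_pos (by linarith) (by linarith)
    have hεB : ε * (B + 1) = S ω - x := by
      rw [hεdef]; field_simp
    choose w hw1 hw2 using fun k => quantile_left_approx (μ k) hω hε
    set ω' : ℝ := Finset.univ.sup' Finset.univ_nonempty w with hω'def
    have hω'lt : ω' < ω := (Finset.sup'_lt_iff Finset.univ_nonempty).mpr fun k _ => (hw1 k).2
    have hω'0 : 0 < ω' := lt_of_lt_of_le (hw1 (Classical.arbitrary _)).1
      (Finset.le_sup' w (Finset.mem_univ _))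
    have hω'mem : ω' ∈ Set.Ioo (0:ℝ) 1 := ⟨hω'0, hω'lt.trans hω.2⟩
    have hSω' : S ω - ε * B ≤ S ω' := by
      rw [hSval ω' hω'mem, hSval ω hω]
      have : ∑ k : Fin K, β k * (quantile (μ k) ω - ε) ≤
          ∑ k : Fin K, β k * quantile (μ k) ω' := by
        refine Finset.sum_le_sum fun k _ => mul_le_mul_of_nonneg_left ?_ (hβ k)
        have hwk : w k ≤ ω' := Finset.le_sup' w (Finset.mem_univ k)
        have hwmem : w k ∈ Set.Ioo (0:ℝ) 1 := ⟨(hw1 k).1, (hw1 k).2.trans hω.2⟩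
        exact (hw2 k).le.trans (quantile_monoOn (μ k) hwmem hω'mem hwk)
      calc (∑ k : Fin K, β k * quantile (μ k) ω) - ε * B
          = ∑ k : Fin K, β k * (quantile (μ k) ω - ε) := by
            rw [hBdef, Finset.mul_sum, ← Finset.sum_sub_distrib]
            congr 1; ext k; ring
        _ ≤ _ := this
    have hxSω' : x < S ω' := by
      have : ε * B < S ω - x := by nlinarith
      linarith
    have hsub : S ⁻¹' Set.Iic x ∩ Set.Ioo 0 1 ⊆ Set.Ioo (0:ℝ) ω' := by
      intro u hu
      refine ⟨hu.2.1, ?_⟩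
      by_contra h
      push_neg at h
      have := hSmono ω' hω'mem u hu.2 h
      have hux : S u ≤ x := hu.1
      linarith
    have hlt : cdfOf ν x < ω := by
      have hm : ν (Set.Iic x) ≤ ENNReal.ofReal ω' := by
        rw [hνIic]
        calc volume (S ⁻¹' Set.Iic x ∩ Set.Ioo 0 1) ≤ volume (Set.Ioo (0:ℝ) ω') :=
              measure_mono hsub
          _ = ENNReal.ofReal ω' := by rw [Real.volume_Ioo, sub_zero]
      calc cdfOf ν x ≤ (ENNReal.ofReal ω').toReal :=
            ENNReal.toReal_mono ENNReal.ofReal_ne_top hm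
        _ = ω' := ENNReal.toReal_ofReal hω'0.le
        _ < ω := hω'lt
    exact absurd hx (not_le.mpr hlt)
  have hquant : quantile ν ω = S ω := by
    refine le_antisymm ?_ ?_
    · exact csInf_le ⟨S ω, key2⟩ key1
    · exact le_csInf ⟨S ω, key1⟩ key2
  calc quantile (Measure.map (fun x => ∑ k : Fin K, β k * Z k x) ℙ) ω
      = quantile ν ω := rfl
    _ = S ω := hquant
    _ = ∑ k : Fin K, β k * quantile (μ k) ω := hSval ω hω
end

section
/- Let (Ω, 𝔽, ℙ) be a probability space and let U : Ω → ℝ be a random variable whose law is the uniform distribution on the interval (0,1) (Lebesgue measure restricted to (0,1)). Let g : (0,1) → ℝ be monotone nondecreasing and left-continuous. Then the quantile function of the law of the random variable ω ↦ g(U(ω)) agrees with g on (0,1). (A nondecreasing left-continuous transform of a uniform random variable has that transform as its quantile function.) -/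
open MeasureTheory

/-- **A nondecreasing left-continuous transform of a uniform random variable has that
transform as its quantile function.** If `U` is uniformly distributed on `(0, 1)` and `g`
is monotone nondecreasing and left-continuous on `(0, 1)`, then the quantile function of
the law of `g ∘ U` agrees with `g` on `(0, 1)`. -/
theorem quantile_of_monotone_transform_of_uniform {Ω : Type*} [MeasurableSpace Ω]
    (ℙ : Measure Ω) [IsProbabilityMeasure ℙ]
    (U : Ω → ℝ) (hU : Measurable U)
    (hUnif : Measure.map U ℙ = volume.restrict (Set.Ioo (0 : ℝ) 1))
    (g : ℝ → ℝ) (hmono : MonotoneOn g (Set.Ioo (0 : ℝ) 1))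
    (hlc : ∀ x ∈ Set.Ioo (0 : ℝ) 1, ContinuousWithinAt g (Set.Iio x) x) :
    ∀ ω ∈ Set.Ioo (0 : ℝ) 1,
      quantile (Measure.map (fun a => g (U a)) ℙ) ω = g ω := by
  intro ω hω
  obtain ⟨hω0, hω1⟩ := hω
  set g' : ℝ → ℝ := fun x => if x ∈ Set.Ioo (0:ℝ) 1 then g x else 0 with hg'def
  have hg'eq : ∀ x ∈ Set.Ioo (0:ℝ) 1, g' x = g x := fun x hx => if_pos hx
  have hA : ∀ t : ℝ, MeasurableSet {x : ℝ | x ∈ Set.Ioo (0:ℝ) 1 ∧ g x ≤ t} := by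
    intro t
    apply Set.OrdConnected.measurableSet
    constructor
    rintro a ⟨⟨ha0, ha1⟩, hat⟩ b ⟨⟨hb0, hb1⟩, hbt⟩ c ⟨hac, hcb⟩
    have hc : c ∈ Set.Ioo (0:ℝ) 1 := ⟨lt_of_lt_of_le ha0 hac, lt_of_le_of_lt hcb hb1⟩
    exact ⟨hc, le_trans (hmono hc ⟨hb0, hb1⟩ hcb) hbt⟩
  have hg'm : Measurable g' := by
    apply measurable_of_Iic
    intro t
    by_cases h0 : (0:ℝ) ≤ t
    · have he : g' ⁻¹' Set.Iic t
          = {x : ℝ | x ∈ Set.Ioo (0:ℝ) 1 ∧ g x ≤ t} ∪ (Set.Ioo (0:ℝ) 1)ᶜ := by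
        ext x
        simp only [hg'def, Set.mem_preimage, Set.mem_Iic, Set.mem_union,
          Set.mem_setOf_eq, Set.mem_compl_iff]
        split_ifs with hx <;> simp [hx, h0]
      rw [he]
      exact (hA t).union measurableSet_Ioo.compl
    · have he : g' ⁻¹' Set.Iic t = {x : ℝ | x ∈ Set.Ioo (0:ℝ) 1 ∧ g x ≤ t} := by
        ext x
        simp only [hg'def, Set.mem_preimage, Set.mem_Iic, Set.mem_setOf_eq]
        split_ifs with hx <;> simp [hx, h0]
      rw [he]
      exact hA t
  have hUae : ∀ᵐ a ∂ℙ, U a ∈ Set.Ioo (0:ℝ) 1 := by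
    have h1 : ℙ (U ⁻¹' (Set.Ioo (0:ℝ) 1)ᶜ) = 0 := by
      have h2 : Measure.map U ℙ (Set.Ioo (0:ℝ) 1)ᶜ = ℙ (U ⁻¹' (Set.Ioo (0:ℝ) 1)ᶜ) :=
        Measure.map_apply hU (measurableSet_Ioo : MeasurableSet (Set.Ioo (0:ℝ) 1)).compl
      rw [hUnif, Measure.restrict_apply measurableSet_Ioo.compl] at h2
      rw [← h2]
      simp
    exact h1
  have hmap : Measure.map (fun a => g (U a)) ℙ
      = Measure.map g' (volume.restrict (Set.Ioo (0:ℝ) 1)) := by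
    rw [← hUnif, Measure.map_map hg'm hU]
    apply Measure.map_congr
    filter_upwards [hUae] with a ha
    simp only [Function.comp_apply]
    exact (hg'eq _ ha).symm
  have hcdf : ∀ x : ℝ, cdfOf (Measure.map (fun a => g (U a)) ℙ) x
      = (volume {u : ℝ | u ∈ Set.Ioo (0:ℝ) 1 ∧ g u ≤ x}).toReal := by
    intro x
    rw [hmap]
    unfold cdfOf
    rw [Measure.map_apply hg'm measurableSet_Iic,
      Measure.restrict_apply (hg'm measurableSet_Iic)]
    have he : g' ⁻¹' Set.Iic x ∩ Set.Ioo (0:ℝ) 1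
        = {u : ℝ | u ∈ Set.Ioo (0:ℝ) 1 ∧ g u ≤ x} := by
      ext u
      simp only [hg'def, Set.mem_inter_iff, Set.mem_preimage, Set.mem_Iic, Set.mem_setOf_eq]
      split_ifs with hu <;> simp [hu]
    rw [he]
  have hfin : ∀ x : ℝ, volume {u : ℝ | u ∈ Set.Ioo (0:ℝ) 1 ∧ g u ≤ x} ≠ ⊤ := by
    intro x
    refine ne_top_of_le_ne_top ?_ (measure_mono (fun u hu => hu.1))
    simp [Real.volume_Ioo]
  have hset : {x : ℝ | ω ≤ cdfOf (Measure.map (fun a => g (U a)) ℙ) x}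
      = Set.Ici (g ω) := by
    ext x
    simp only [Set.mem_setOf_eq, Set.mem_Ici, hcdf]
    constructor
    · intro hx
      by_contra hgx
      push_neg at hgx
      have hev : ∀ᶠ u in nhdsWithin ω (Set.Iio ω), x < g u :=
        (hlc ω ⟨hω0, hω1⟩).eventually (eventually_gt_nhds hgx)
      obtain ⟨a, ha, hsub⟩ := mem_nhdsLT_iff_exists_Ioo_subset.1 hev
      have ha' : max a 0 < ω := max_lt ha hω0
      have hsubset : {u : ℝ | u ∈ Set.Ioo (0:ℝ) 1 ∧ g u ≤ x} ⊆ Set.Ioc 0 (max a 0) := by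
        rintro u ⟨⟨hu0, hu1⟩, hgu⟩
        refine ⟨hu0, ?_⟩
        by_contra hcon
        push_neg at hcon
        rcases lt_or_ge u ω with huω | huω
        · exact absurd hgu (not_le.2 (hsub ⟨lt_of_le_of_lt (le_max_left a 0) hcon, huω⟩))
        · exact absurd hgu (not_le.2 (lt_of_lt_of_le hgx
            (hmono ⟨hω0, hω1⟩ ⟨hu0, hu1⟩ huω)))
      have h2 : (volume {u : ℝ | u ∈ Set.Ioo (0:ℝ) 1 ∧ g u ≤ x}).toReal ≤ max a 0 := by
        calc (volume {u : ℝ | u ∈ Set.Ioo (0:ℝ) 1 ∧ g u ≤ x}).toReal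
            ≤ (volume (Set.Ioc (0:ℝ) (max a 0))).toReal :=
              ENNReal.toReal_mono measure_Ioc_lt_top.ne (measure_mono hsubset)
          _ = max a 0 := by
              rw [Real.volume_Ioc, sub_zero, ENNReal.toReal_ofReal (le_max_right a 0)]
      linarith [hx.trans h2]
    · intro hx
      have hsub : Set.Ioc (0:ℝ) ω ⊆ {u : ℝ | u ∈ Set.Ioo (0:ℝ) 1 ∧ g u ≤ x} := by
        rintro u ⟨hu0, huω⟩
        exact ⟨⟨hu0, lt_of_le_of_lt huω hω1⟩,
          le_trans (hmono ⟨hu0, lt_of_le_of_lt huω hω1⟩ ⟨hω0, hω1⟩ huω) hx⟩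
      have h1 := ENNReal.toReal_mono (hfin x) (measure_mono hsub)
      rwa [Real.volume_Ioc, sub_zero, ENNReal.toReal_ofReal hω0.le] at h1
  show sInf _ = _
  rw [hset, csInf_Ici]
end
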